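/- For r ≥ 2, let H be an r-uniform hypergraph with n vertices and m ≥ 1 edges in which every vertex lies in at least one edge, and let d = rm/n be its average degree. Then the transversal number of H satisfies τ(H) ≤ (1 − ((r−1)/r)·(1/d)^{1/(r−1)}) · n, and moreover this bound is at most n(ln(d) + 1)/r. -/

import Mathlib

open Finset

lemma wsum_one {α : Type*} [DecidableEq α] (p : ℝ) (U : Finset α) :
    ∑ B ∈ U.powerset, p ^ B.card * (1 - p) ^ (U.card - B.card) = 1 := by
  induction U using Finset.induction with
  | empty => simp
  | @insert a U ha ih =>
    have hdisj : Disjoint U.powerset (U.powerset.image (insert a)) := by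
      rw [Finset.disjoint_left]
      intro B hB hB'
      obtain ⟨C, hC, rfl⟩ := Finset.mem_image.mp hB'
      exact ha (Finset.mem_powerset.mp hB (Finset.mem_insert_self a C))
    rw [Finset.powerset_insert, Finset.sum_union hdisj, Finset.sum_image (by
      intro B hB C hC h
      have haB : a ∉ B := fun hh => ha (Finset.mem_powerset.mp hB hh)
      have haC : a ∉ C := fun hh => ha (Finset.mem_powerset.mp hC hh)
      rw [← Finset.erase_insert haB, ← Finset.erase_insert haC, h]),
      ← Finset.sum_add_distrib]
    refine Eq.trans (Finset.sum_congr rfl ?_) ih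
    intro B hB
    have hBU : B ⊆ U := Finset.mem_powerset.mp hB
    have haB : a ∉ B := fun h => ha (hBU h)
    have hcard : B.card ≤ U.card := Finset.card_le_card hBU
    rw [Finset.card_insert_of_notMem ha, Finset.card_insert_of_notMem haB]
    have h1 : U.card + 1 - B.card = (U.card - B.card) + 1 := by omega
    have h2 : U.card + 1 - (B.card + 1) = U.card - B.card := by omega
    rw [h1, h2, pow_succ, pow_succ]
    ring

lemma wsum_superset {α : Type*} [DecidableEq α] (p : ℝ) (U A : Finset α) (hA : A ⊆ U) :
    ∑ S ∈ U.powerset.filter (fun S => A ⊆ S), p ^ S.card * (1 - p) ^ (U.card - S.card)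
      = p ^ A.card := by
  have key : ∀ B ∈ (U \ A).powerset,
      p ^ (A ∪ B).card * (1 - p) ^ (U.card - (A ∪ B).card)
        = p ^ A.card * (p ^ B.card * (1 - p) ^ ((U \ A).card - B.card)) := by
    intro B hB
    have hB' : B ⊆ U \ A := Finset.mem_powerset.mp hB
    have hdisj : Disjoint A B := by
      rw [Finset.disjoint_left]
      intro x hx hx'
      exact (Finset.mem_sdiff.mp (hB' hx')).2 hx
    have h1 : (A ∪ B).card = A.card + B.card := Finset.card_union_of_disjoint hdisj
    have h2 : (U \ A).card = U.card - A.card := Finset.card_sdiff_of_subset hA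
    have hAU : A.card ≤ U.card := Finset.card_le_card hA
    have hBU : B.card ≤ U.card - A.card := h2 ▸ Finset.card_le_card hB'
    rw [h1, h2]
    have h3 : U.card - (A.card + B.card) = U.card - A.card - B.card := by omega
    rw [h3, pow_add]
    ring
  calc ∑ S ∈ U.powerset.filter (fun S => A ⊆ S), p ^ S.card * (1 - p) ^ (U.card - S.card)
      = ∑ B ∈ (U \ A).powerset, p ^ (A ∪ B).card * (1 - p) ^ (U.card - (A ∪ B).card) := by
        apply Finset.sum_nbij' (fun S => S \ A) (fun B => A ∪ B)
        · intro S hS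
          rw [Finset.mem_filter, Finset.mem_powerset] at hS
          exact Finset.mem_powerset.mpr (Finset.sdiff_subset_sdiff hS.1 le_rfl)
        · intro B hB
          rw [Finset.mem_powerset] at hB
          rw [Finset.mem_filter, Finset.mem_powerset]
          exact ⟨Finset.union_subset hA (hB.trans Finset.sdiff_subset), Finset.subset_union_left⟩
        · intro S hS
          rw [Finset.mem_filter] at hS
          exact Finset.union_sdiff_of_subset hS.2
        · intro B hB
          rw [Finset.mem_powerset] at hB
          apply Finset.union_sdiff_cancel_left
          rw [Finset.disjoint_left]
          intro x hx hx'
          exact (Finset.mem_sdiff.mp (hB hx')).2 hx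
        · intro S hS
          rw [Finset.mem_filter] at hS
          rw [Finset.union_sdiff_of_subset hS.2]
    _ = p ^ A.card := by
        rw [Finset.sum_congr rfl key, ← Finset.mul_sum, wsum_one, mul_one]

/-- The transversal number of a hypergraph given by its (finite) edge set `E`:
the minimum cardinality of a set of vertices meeting every edge. -/
noncomputable def hyperTransversalNum {V : Type*} [Fintype V] [DecidableEq V]
    (E : Finset (Finset V)) : ℕ :=
  sInf {t | ∃ T : Finset V, (∀ e ∈ E, (T ∩ e).Nonempty) ∧ T.card = t}

theorem stmt3 {V : Type*} [Fintype V] [DecidableEq V] {r n m : ℕ} (hr : 2 ≤ r)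
    (E : Finset (Finset V)) (hn : Fintype.card V = n) (hm : E.card = m)
    (hm1 : 1 ≤ m) (huniform : ∀ e ∈ E, e.card = r)
    (hmindeg : ∀ v : V, ∃ e ∈ E, v ∈ e)
    (d : ℝ) (hd : d = (r : ℝ) * m / n) :
    (hyperTransversalNum E : ℝ) ≤
        (1 - (((r : ℝ) - 1) / r) * (1 / d) ^ ((1 : ℝ) / ((r : ℝ) - 1))) * n ∧
      (1 - (((r : ℝ) - 1) / r) * (1 / d) ^ ((1 : ℝ) / ((r : ℝ) - 1))) * n ≤
        n * (Real.log d + 1) / r := by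
  classical
  have huniv : (Finset.univ : Finset V).card = n := by simpa using hn
  obtain ⟨e0, he0⟩ : E.Nonempty := Finset.card_pos.mp (by omega)
  have hrn : r ≤ n := by
    have h := Finset.card_le_card (Finset.subset_univ e0)
    rw [huniform e0 he0, huniv] at h
    exact h
  have hn0 : 0 < n := by omega
  have hnm : n ≤ r * m := by
    have hsub : (Finset.univ : Finset V) ⊆ E.biUnion id := by
      intro v _
      obtain ⟨e, he, hv⟩ := hmindeg v
      exact Finset.mem_biUnion.mpr ⟨e, he, hv⟩
    calc n = (Finset.univ : Finset V).card := huniv.symm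
      _ ≤ (E.biUnion id).card := Finset.card_le_card hsub
      _ ≤ ∑ e ∈ E, (id e).card := Finset.card_biUnion_le
      _ = ∑ _e ∈ E, r := Finset.sum_congr rfl (fun e he => huniform e he)
      _ = m * r := by rw [Finset.sum_const, hm, smul_eq_mul]
      _ = r * m := Nat.mul_comm m r
  have hnR : (0:ℝ) < n := by exact_mod_cast hn0
  have hrR : (0:ℝ) < r := by positivity
  have hmR : (0:ℝ) < m := by exact_mod_cast hm1
  have hd1 : (1:ℝ) ≤ d := by
    rw [hd, le_div_iff₀ hnR, one_mul]
    exact_mod_cast hnm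
  have hd0 : (0:ℝ) < d := by linarith
  have hr1R : (0:ℝ) < (r:ℝ) - 1 := by
    have : (2:ℝ) ≤ (r:ℝ) := by exact_mod_cast hr
    linarith
  set p : ℝ := (1/d) ^ ((1:ℝ)/((r:ℝ)-1)) with hp_def
  have hp_pos : 0 < p := Real.rpow_pos_of_pos (by positivity) _
  have hp_le1 : p ≤ 1 := Real.rpow_le_one (by positivity) (by rw [div_le_one hd0]; linarith)
    (by positivity)
  have hprm1 : p ^ (r-1) = 1/d := by
    rw [hp_def, ← Real.rpow_natCast ((1/d) ^ ((1:ℝ)/((r:ℝ)-1))) (r-1),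
      ← Real.rpow_mul (by positivity)]
    have hc : ((r-1:ℕ):ℝ) = (r:ℝ)-1 := by
      have : 1 ≤ r := by omega
      push_cast [this]
      ring
    have he : (1:ℝ)/((r:ℝ)-1) * ((r-1 : ℕ):ℝ) = 1 := by
      rw [hc]
      field_simp
    rw [he, Real.rpow_one]
  have hpr : (m:ℝ) * p ^ r = (n:ℝ)/r * p := by
    have h1 : p ^ r = p ^ (r-1) * p := by
      rw [← pow_succ]
      congr 1
      omega
    rw [h1, hprm1, hd]
    field_simp
  set w : Finset V → ℝ := fun S => p ^ S.card * (1 - p) ^ (n - S.card) with hw_def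
  have hw_nonneg : ∀ S, 0 ≤ w S := fun S =>
    mul_nonneg (pow_nonneg hp_pos.le _) (pow_nonneg (by linarith) _)
  have htotal : ∑ S ∈ (Finset.univ : Finset V).powerset, w S = 1 := by
    have h := wsum_one p (Finset.univ : Finset V)
    rw [huniv] at h
    exact h
  have hsup : ∀ A : Finset V,
      ∑ S ∈ (Finset.univ : Finset V).powerset.filter (fun S => A ⊆ S), w S = p ^ A.card := by
    intro A
    have h := wsum_superset p Finset.univ A (Finset.subset_univ A)
    rw [huniv] at h
    exact h
  set c : Finset V → ℕ := fun S => (E.filter (fun e => e ⊆ S)).card with hc_def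
  have hE1 : ∑ S ∈ (Finset.univ : Finset V).powerset, w S * S.card = p * n := by
    have hcardsum : ∀ S : Finset V, (S.card : ℝ) = ∑ v ∈ Finset.univ, if v ∈ S then (1:ℝ) else 0 := by
      intro S
      rw [Finset.sum_ite_mem, Finset.univ_inter, Finset.sum_const, nsmul_eq_mul, mul_one]
    calc ∑ S ∈ (Finset.univ : Finset V).powerset, w S * S.card
        = ∑ S ∈ (Finset.univ : Finset V).powerset, ∑ v ∈ Finset.univ,
            w S * (if v ∈ S then (1:ℝ) else 0) := by
          refine Finset.sum_congr rfl fun S _ => ?_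
          rw [← Finset.mul_sum, ← hcardsum S]
      _ = ∑ v ∈ Finset.univ, ∑ S ∈ (Finset.univ : Finset V).powerset,
            w S * (if v ∈ S then (1:ℝ) else 0) := Finset.sum_comm
      _ = ∑ _v ∈ (Finset.univ : Finset V), p := by
          refine Finset.sum_congr rfl fun v _ => ?_
          have h1 : ∀ S ∈ (Finset.univ : Finset V).powerset,
              w S * (if v ∈ S then (1:ℝ) else 0) = if ({v} : Finset V) ⊆ S then w S else 0 := by
            intro S _
            by_cases h : v ∈ S <;> simp [h, Finset.singleton_subset_iff]
          rw [Finset.sum_congr rfl h1, ← Finset.sum_filter, hsup, Finset.card_singleton, pow_one]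
      _ = p * n := by
          rw [Finset.sum_const, huniv, nsmul_eq_mul, mul_comm]
  have hE2 : ∑ S ∈ (Finset.univ : Finset V).powerset, w S * c S = m * p ^ r := by
    have hcsum : ∀ S : Finset V, ((c S : ℝ)) = ∑ e ∈ E, if e ⊆ S then (1:ℝ) else 0 := by
      intro S
      rw [hc_def]
      simp only [Finset.card_filter, Nat.cast_sum]
      exact Finset.sum_congr rfl fun e _ => by split <;> simp
    calc ∑ S ∈ (Finset.univ : Finset V).powerset, w S * c S
        = ∑ S ∈ (Finset.univ : Finset V).powerset, ∑ e ∈ E,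
            w S * (if e ⊆ S then (1:ℝ) else 0) := by
          refine Finset.sum_congr rfl fun S _ => ?_
          rw [← Finset.mul_sum, ← hcsum S]
      _ = ∑ e ∈ E, ∑ S ∈ (Finset.univ : Finset V).powerset,
            w S * (if e ⊆ S then (1:ℝ) else 0) := Finset.sum_comm
      _ = ∑ e ∈ E, p ^ r := by
          refine Finset.sum_congr rfl fun e he => ?_
          have h1 : ∀ S ∈ (Finset.univ : Finset V).powerset,
              w S * (if e ⊆ S then (1:ℝ) else 0) = if e ⊆ S then w S else 0 := by
            intro S _
            by_cases h : e ⊆ S <;> simp [h]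
          rw [Finset.sum_congr rfl h1, ← Finset.sum_filter, hsup, huniform e he]
      _ = m * p ^ r := by rw [Finset.sum_const, hm, nsmul_eq_mul]
  set tgt : ℝ := p * n - m * p ^ r with htgt_def
  have hkey : ∑ S ∈ (Finset.univ : Finset V).powerset, w S * ((S.card:ℝ) - c S) = tgt := by
    rw [htgt_def, ← hE1, ← hE2, ← Finset.sum_sub_distrib]
    refine Finset.sum_congr rfl fun S _ => ?_
    ring
  set P := (Finset.univ : Finset V).powerset.filter (fun S => 0 < w S) with hP_def
  have hPsum : ∑ S ∈ P, w S = 1 := by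
    rw [hP_def]
    rw [Finset.sum_filter_of_ne (fun S _ h => lt_of_le_of_ne (hw_nonneg S) (Ne.symm h))]
    exact htotal
  have hPkey : ∑ S ∈ P, w S * ((S.card:ℝ) - c S) = tgt := by
    rw [hP_def]
    rw [Finset.sum_filter_of_ne (fun S _ h =>
      lt_of_le_of_ne (hw_nonneg S) (Ne.symm (left_ne_zero_of_mul h)))]
    exact hkey
  have hPne : P.Nonempty := by
    by_contra h
    rw [Finset.not_nonempty_iff_eq_empty] at h
    rw [h, Finset.sum_empty] at hPsum
    norm_num at hPsum
  have hsums : ∑ S ∈ P, tgt * w S ≤ ∑ S ∈ P, ((S.card:ℝ) - c S) * w S := by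
    rw [← Finset.mul_sum, hPsum, mul_one]
    have : ∑ S ∈ P, ((S.card:ℝ) - c S) * w S = tgt := by
      rw [← hPkey]
      exact Finset.sum_congr rfl fun S _ => mul_comm _ _
    rw [this]
  obtain ⟨S, hSP, hle⟩ := Finset.exists_le_of_sum_le hPne hsums
  have hwS : 0 < w S := (Finset.mem_filter.mp hSP).2
  have hgood : tgt ≤ (S.card:ℝ) - c S := le_of_mul_le_mul_right hle hwS
  -- construct the transversal
  have hVne : Nonempty V := Fintype.card_pos_iff.mp (by omega)
  set pick : Finset V → V := fun e => if h : e.Nonempty then h.choose else Classical.arbitrary V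
    with hpick_def
  have hpick : ∀ e : Finset V, e.Nonempty → pick e ∈ e := by
    intro e he
    simp only [hpick_def, dif_pos he]
    exact he.choose_spec
  set F := E.filter (fun e => e ⊆ S) with hF_def
  set S' := S \ F.image pick with hS'_def
  have hS'card : S.card - F.card ≤ S'.card := by
    have h1 : (F.image pick).card ≤ F.card := Finset.card_image_le
    have h2 : S.card - (F.image pick).card ≤ S'.card := Finset.le_card_sdiff _ _
    omega
  have hS'free : ∀ e ∈ E, ¬ e ⊆ S' := by
    intro e he hsub
    have heS : e ⊆ S := hsub.trans Finset.sdiff_subset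
    have heF : e ∈ F := Finset.mem_filter.mpr ⟨he, heS⟩
    have hene : e.Nonempty := Finset.card_pos.mp (by rw [huniform e he]; omega)
    have h2 : pick e ∈ F.image pick := Finset.mem_image_of_mem _ heF
    exact (Finset.mem_sdiff.mp (hsub (hpick e hene))).2 h2
  set T := (Finset.univ : Finset V) \ S' with hT_def
  have hTtrans : ∀ e ∈ E, (T ∩ e).Nonempty := by
    intro e he
    obtain ⟨v, hv, hv'⟩ := Finset.not_subset.mp (hS'free e he)
    exact ⟨v, Finset.mem_inter.mpr ⟨Finset.mem_sdiff.mpr ⟨Finset.mem_univ v, hv'⟩, hv⟩⟩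
  have hτ : hyperTransversalNum E ≤ T.card := Nat.sInf_le ⟨T, hTtrans, rfl⟩
  have hTcard : T.card = n - S'.card := by
    rw [hT_def, Finset.card_sdiff_of_subset (Finset.subset_univ S'), huniv]
  have hS'n : S'.card ≤ n := huniv ▸ Finset.card_le_card (Finset.subset_univ S')
  have hτR : (hyperTransversalNum E : ℝ) ≤ (n:ℝ) - ((S.card:ℝ) - c S) := by
    have h0 : (hyperTransversalNum E : ℝ) ≤ (T.card : ℝ) := by exact_mod_cast hτ
    have h1 : (T.card : ℝ) = (n:ℝ) - S'.card := by
      rw [hTcard, Nat.cast_sub hS'n]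
    have hineq : S.card ≤ S'.card + F.card := by omega
    have h2 : (S.card:ℝ) ≤ (S'.card:ℝ) + (F.card:ℝ) := by exact_mod_cast hineq
    have hcF : (c S : ℝ) = (F.card : ℝ) := by rw [hc_def, hF_def]
    linarith
  constructor
  · have h2 : (n:ℝ) - tgt = (1 - (((r:ℝ)-1)/r)*p) * n := by
      rw [htgt_def, hpr]
      field_simp
    linarith
  · have hlog : 0 ≤ Real.log d := Real.log_nonneg hd1
    have hpexp : p = Real.exp (-(Real.log d / ((r:ℝ)-1))) := by
      rw [hp_def, Real.rpow_def_of_pos (by positivity), one_div d, Real.log_inv]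
      congr 1
      field_simp
    have h1p : 1 - p ≤ Real.log d / ((r:ℝ)-1) := by
      have h := Real.add_one_le_exp (-(Real.log d / ((r:ℝ)-1)))
      rw [← hpexp] at h
      linarith
    have hfin : (r:ℝ) - ((r:ℝ)-1)*p ≤ Real.log d + 1 := by
      have hc : ((r:ℝ)-1)*(1-p) ≤ Real.log d := by
        calc ((r:ℝ)-1)*(1-p) ≤ ((r:ℝ)-1) * (Real.log d/((r:ℝ)-1)) :=
              mul_le_mul_of_nonneg_left h1p hr1R.le
          _ = Real.log d := by field_simp
      nlinarith
    have hrw : (1 - (((r:ℝ)-1)/r)*p) * n = (n:ℝ) * ((r:ℝ) - ((r:ℝ)-1)*p) / r := by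
      field_simp
    rw [hrw]
    gcongr
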